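/- For N ≥ 3 and 0 < μ < μ̄ := (N-2)²/4, the function V_σ(x) = C_μ (σ/(σ²|x|^{β₁} + |x|^{β₂}))^{(N-2)/2}, where β₁ = (√μ̄ - √(μ̄-μ))/√μ̄, β₂ = (√μ̄ + √(μ̄-μ))/√μ̄, C_μ = (4N(μ̄-μ)/(N-2))^{(N-2)/4}, satisfies -ΔV_σ - μ V_σ/|x|² = V_σ^{(N+2)/(N-2)} pointwise on ℝ^N \ {0}. -/

import Mathlib

open MeasureTheory

noncomputable def lap {N : ℕ} (f : EuclideanSpace ℝ (Fin N) → ℝ)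
    (x : EuclideanSpace ℝ (Fin N)) : ℝ :=
  ∑ i : Fin N, fderiv ℝ (fun y => fderiv ℝ f y (EuclideanSpace.single i 1)) x
      (EuclideanSpace.single i 1)

lemma fderiv_radial {N : ℕ} (h h₁ : ℝ → ℝ)
    (hd1 : ∀ t : ℝ, 0 < t → HasDerivAt h (h₁ t) t)
    (y : EuclideanSpace ℝ (Fin N)) (hy : y ≠ 0) :
    HasFDerivAt (fun z : EuclideanSpace ℝ (Fin N) => h (‖z‖ ^ 2))
      (h₁ (‖y‖ ^ 2) • (2 • (innerSL ℝ y))) y := by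
  have h1 : HasFDerivAt (fun z : EuclideanSpace ℝ (Fin N) => ‖z‖ ^ 2)
      (2 • (innerSL ℝ y)) y := (hasStrictFDerivAt_norm_sq y).hasFDerivAt
  have h2 : HasDerivAt h (h₁ (‖y‖ ^ 2)) (‖y‖ ^ 2) :=
    hd1 _ (by have := norm_pos_iff.mpr hy; positivity)
  exact h2.comp_hasFDerivAt y h1

lemma lap_radial {N : ℕ} (h h₁ h₂ : ℝ → ℝ)
    (hd1 : ∀ t : ℝ, 0 < t → HasDerivAt h (h₁ t) t)
    (hd2 : ∀ t : ℝ, 0 < t → HasDerivAt h₁ (h₂ t) t)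
    (x : EuclideanSpace ℝ (Fin N)) (hx : x ≠ 0) :
    lap (fun y => h (‖y‖ ^ 2)) x
      = 4 * ‖x‖ ^ 2 * h₂ (‖x‖ ^ 2) + 2 * N * h₁ (‖x‖ ^ 2) := by
  have key : ∀ i : Fin N,
      fderiv ℝ (fun y => fderiv ℝ (fun z : EuclideanSpace ℝ (Fin N) => h (‖z‖ ^ 2)) y
        (EuclideanSpace.single i 1)) x (EuclideanSpace.single i 1)
      = 4 * (x i) ^ 2 * h₂ (‖x‖ ^ 2) + 2 * h₁ (‖x‖ ^ 2) := by
    intro i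
    have hev : (fun y => fderiv ℝ (fun z : EuclideanSpace ℝ (Fin N) => h (‖z‖ ^ 2)) y
        (EuclideanSpace.single i 1))
        =ᶠ[nhds x] (fun y => h₁ (‖y‖ ^ 2) * (2 * y i)) := by
      filter_upwards [isOpen_compl_singleton.mem_nhds (by simpa using hx :
        x ∈ ({0} : Set (EuclideanSpace ℝ (Fin N)))ᶜ)] with y hy
      have := (fderiv_radial h h₁ hd1 y hy).fderiv
      rw [this]
      simp [real_inner_comm, EuclideanSpace.inner_single_left, EuclideanSpace.inner_single_right]
    rw [Filter.EventuallyEq.fderiv_eq hev]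
    have hG : HasFDerivAt (fun y : EuclideanSpace ℝ (Fin N) => h₁ (‖y‖ ^ 2) * (2 * y i))
        ((2 * x i) • (h₂ (‖x‖ ^ 2) • (2 • (innerSL ℝ x)))
          + (h₁ (‖x‖ ^ 2) * 2) • (EuclideanSpace.proj i : EuclideanSpace ℝ (Fin N) →L[ℝ] ℝ)) x := by
      have hA : HasFDerivAt (fun y : EuclideanSpace ℝ (Fin N) => h₁ (‖y‖ ^ 2))
          (h₂ (‖x‖ ^ 2) • (2 • (innerSL ℝ x))) x := fderiv_radial h₁ h₂ hd2 x hx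
      have hB : HasFDerivAt (fun y : EuclideanSpace ℝ (Fin N) => (2 : ℝ) * y i)
          ((2:ℝ) • (EuclideanSpace.proj i : EuclideanSpace ℝ (Fin N) →L[ℝ] ℝ)) x := by
        exact ((EuclideanSpace.proj i : EuclideanSpace ℝ (Fin N) →L[ℝ] ℝ).hasFDerivAt).const_mul 2
          |>.congr_fderiv (by ext z; simp)
      have := hA.mul hB
      refine this.congr_fderiv ?_
      ext z
      simp
      ring
    rw [hG.fderiv]
    simp [EuclideanSpace.inner_single_left, real_inner_comm, EuclideanSpace.inner_single_right]
    ring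
  unfold lap
  rw [Finset.sum_congr rfl (fun i _ => key i)]
  rw [Finset.sum_add_distrib]
  simp [Finset.sum_const, Finset.mul_sum]
  have : ∑ i : Fin N, 4 * (x i)^2 * h₂ (‖x‖^2) = 4 * ‖x‖^2 * h₂ (‖x‖^2) := by
    rw [← Finset.sum_mul, ← Finset.mul_sum]
    congr 2
    rw [EuclideanSpace.norm_eq]
    rw [Real.sq_sqrt (by positivity)]
    simp [sq_abs]
  rw [this]
  ring

lemma hasDerivAt_w (σ a b t : ℝ) (ht : 0 < t) :
    HasDerivAt (fun r : ℝ => σ^2 * r^a + r^b)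
      (σ^2 * (a * t^(a-1)) + b * t^(b-1)) t :=
  ((Real.hasDerivAt_rpow_const (Or.inl ht.ne')).const_mul (σ^2)).add
    (Real.hasDerivAt_rpow_const (Or.inl ht.ne'))

lemma hasDerivAt_w1 (σ a b t : ℝ) (ht : 0 < t) :
    HasDerivAt (fun r : ℝ => σ^2 * (a * r^(a-1)) + b * r^(b-1))
      (σ^2 * (a * ((a-1) * t^(a-1-1))) + b * ((b-1) * t^(b-1-1))) t :=
  (((Real.hasDerivAt_rpow_const (Or.inl ht.ne')).const_mul a).const_mul (σ^2)).add
    ((Real.hasDerivAt_rpow_const (Or.inl ht.ne')).const_mul b)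

lemma wpos (σ a b t : ℝ) (ht : 0 < t) : 0 < σ^2 * t^a + t^b := by
  have h1 : 0 < t ^ b := Real.rpow_pos_of_pos ht b
  have h2 : 0 ≤ σ^2 * t^a := by positivity
  linarith

lemma hasDerivAt_h (σ a b p K t : ℝ) (ht : 0 < t) :
    HasDerivAt (fun r : ℝ => K * (σ^2 * r^a + r^b)^(-p))
      (K * ((σ^2 * (a * t^(a-1)) + b * t^(b-1)) * -p * (σ^2 * t^a + t^b)^(-p-1))) t :=
  ((hasDerivAt_w σ a b t ht).rpow_const (Or.inl (wpos σ a b t ht).ne')).const_mul K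

lemma hasDerivAt_h1 (σ a b p K t : ℝ) (ht : 0 < t) :
    HasDerivAt (fun r : ℝ =>
        K * ((σ^2 * (a * r^(a-1)) + b * r^(b-1)) * -p * (σ^2 * r^a + r^b)^(-p-1)))
      (K * ((σ^2 * (a * ((a-1) * t^(a-1-1))) + b * ((b-1) * t^(b-1-1))) * -p
            * (σ^2 * t^a + t^b)^(-p-1)
          + (σ^2 * (a * t^(a-1)) + b * t^(b-1)) * -p
            * ((σ^2 * (a * t^(a-1)) + b * t^(b-1)) * (-p-1) * (σ^2 * t^a + t^b)^(-p-1-1)))) t :=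
  (((hasDerivAt_w1 σ a b t ht).mul_const (-p)).mul
      ((hasDerivAt_w σ a b t ht).rpow_const (Or.inl (wpos σ a b t ht).ne'))).const_mul K

set_option maxHeartbeats 1000000 in
theorem hardy_instanton_solves (N : ℕ) (hN : 3 ≤ N) (μ σ : ℝ)
    (hμ0 : 0 < μ) (hμ : μ < ((N : ℝ) - 2) ^ 2 / 4) (hσ : 0 < σ) :
    let μbar : ℝ := ((N : ℝ) - 2) ^ 2 / 4
    let β₁ : ℝ := (Real.sqrt μbar - Real.sqrt (μbar - μ)) / Real.sqrt μbar
    let β₂ : ℝ := (Real.sqrt μbar + Real.sqrt (μbar - μ)) / Real.sqrt μbar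
    let Cμ : ℝ := (4 * (N : ℝ) * (μbar - μ) / ((N : ℝ) - 2)) ^ (((N : ℝ) - 2) / 4)
    let V : EuclideanSpace ℝ (Fin N) → ℝ :=
      fun x => Cμ * (σ / (σ ^ 2 * ‖x‖ ^ β₁ + ‖x‖ ^ β₂)) ^ (((N : ℝ) - 2) / 2)
    ∀ x : EuclideanSpace ℝ (Fin N), x ≠ 0 →
      -lap V x - μ * V x / ‖x‖ ^ 2 = V x ^ (((N : ℝ) + 2) / ((N : ℝ) - 2)) := by
  intro μbar β₁ β₂ Cμ V x hx
  have hN3 : (3:ℝ) ≤ (N:ℝ) := by exact_mod_cast hN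
  have hμbar_def : μbar = ((N:ℝ)-2)^2/4 := rfl
  have hβ₁ : β₁ = (Real.sqrt μbar - Real.sqrt (μbar - μ)) / Real.sqrt μbar := rfl
  have hβ₂ : β₂ = (Real.sqrt μbar + Real.sqrt (μbar - μ)) / Real.sqrt μbar := rfl
  have hCμ : Cμ = (4*(N:ℝ)*(μbar-μ)/((N:ℝ)-2)) ^ (((N:ℝ)-2)/4) := rfl
  have hVdef : V = fun y => Cμ * (σ / (σ^2*‖y‖^β₁ + ‖y‖^β₂)) ^ (((N:ℝ)-2)/2) := rfl
  set p : ℝ := ((N:ℝ)-2)/2 with hp_def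
  set s : ℝ := Real.sqrt (μbar - μ) with hs_def
  have hp : 0 < p := by rw [hp_def]; linarith
  have hμltb : μ < μbar := by rw [hμbar_def]; exact hμ
  have hμbarp : μbar = p^2 := by rw [hμbar_def, hp_def]; ring
  have hsq : Real.sqrt μbar = p := by rw [hμbarp, Real.sqrt_sq hp.le]
  have hs2 : s^2 = p^2 - μ := by
    rw [hs_def, Real.sq_sqrt (by linarith), hμbarp]
  have hs_pos : 0 < s := by rw [hs_def]; exact Real.sqrt_pos.mpr (by linarith)
  have hs_lt : s < p := by nlinarith
  have hNp : (N:ℝ) = 2*p + 2 := by rw [hp_def]; ring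
  set a : ℝ := (p - s)/(2*p) with ha_def
  set b : ℝ := (p + s)/(2*p) with hb_def
  have hb1 : β₁ = 2*a := by rw [hβ₁, hsq, ha_def]; field_simp
  have hb2 : β₂ = 2*b := by rw [hβ₂, hsq, hb_def]; field_simp
  have ha_pos : 0 < a := div_pos (by linarith) (by linarith)
  have hb_pos : 0 < b := div_pos (by linarith) (by linarith)
  have hab : a + b = 1 := by rw [ha_def, hb_def]; field_simp; ring
  set E : ℝ := 4*(N:ℝ)*(μbar-μ)/((N:ℝ)-2) with hE_def
  have hE_pos : 0 < E := by
    rw [hE_def]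
    apply div_pos (by nlinarith) (by linarith)
  have hμbar_sub : μbar - μ = s^2 := by rw [hμbarp]; linarith
  have hE2 : E = 4*(2*p+2)*s^2/(2*p) := by rw [hE_def, hNp, hμbar_sub]; norm_num
  have hCμ2 : Cμ = E ^ (p/2) := by
    rw [hCμ, show (((N:ℝ)-2)/4) = p/2 by rw [hp_def]; ring]
  have hCμ_pos : 0 < Cμ := by rw [hCμ2]; exact Real.rpow_pos_of_pos hE_pos _
  set K : ℝ := Cμ * σ ^ p with hK_def
  have hK_pos : 0 < K := mul_pos hCμ_pos (Real.rpow_pos_of_pos hσ _)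
  -- rewrite V as a radial function
  have hV : V = fun y => K * (σ^2 * (‖y‖^2)^a + (‖y‖^2)^b)^(-p) := by
    rw [hVdef]; funext y
    rcases eq_or_ne y 0 with rfl | hy
    · simp only [norm_zero, hb1, hb2]
      rw [Real.zero_rpow (by positivity : (2*a:ℝ) ≠ 0),
        Real.zero_rpow (by positivity : (2*b:ℝ) ≠ 0)]
      norm_num
      rw [Real.zero_rpow hp.ne', Real.zero_rpow (by positivity : (a:ℝ) ≠ 0),
        Real.zero_rpow (by positivity : (b:ℝ) ≠ 0)]
      norm_num
      rw [Real.zero_rpow (by simp [hp.ne'] : (-p:ℝ) ≠ 0)]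
      simp
    · have hr : 0 < ‖y‖ := norm_pos_iff.mpr hy
      have h2a : (‖y‖^2 : ℝ)^a = ‖y‖^β₁ := by
        rw [hb1, ← Real.rpow_natCast ‖y‖ 2, ← Real.rpow_mul (norm_nonneg y)]
        norm_num
      have h2b : (‖y‖^2 : ℝ)^b = ‖y‖^β₂ := by
        rw [hb2, ← Real.rpow_natCast ‖y‖ 2, ← Real.rpow_mul (norm_nonneg y)]
        norm_num
      rw [h2a, h2b]
      have hW : 0 < σ^2*‖y‖^β₁ + ‖y‖^β₂ := by
        have h1 : 0 < ‖y‖ ^ β₂ := Real.rpow_pos_of_pos hr β₂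
        have h2 : 0 ≤ σ^2 * ‖y‖^β₁ := by positivity
        linarith
      rw [Real.div_rpow hσ.le hW.le, Real.rpow_neg hW.le, hK_def]
      ring
  have hd1 : ∀ u : ℝ, 0 < u → HasDerivAt (fun r : ℝ => K * (σ^2 * r^a + r^b)^(-p))
      (K * ((σ^2 * (a * u^(a-1)) + b * u^(b-1)) * -p * (σ^2 * u^a + u^b)^(-p-1))) u :=
    fun u hu => hasDerivAt_h σ a b p K u hu
  have hd2 : ∀ u : ℝ, 0 < u → HasDerivAt
      (fun u : ℝ => K * ((σ^2 * (a * u^(a-1)) + b * u^(b-1)) * -p * (σ^2 * u^a + u^b)^(-p-1)))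
      (K * ((σ^2 * (a * ((a-1) * u^(a-1-1))) + b * ((b-1) * u^(b-1-1))) * -p
            * (σ^2 * u^a + u^b)^(-p-1)
          + (σ^2 * (a * u^(a-1)) + b * u^(b-1)) * -p
            * ((σ^2 * (a * u^(a-1)) + b * u^(b-1)) * (-p-1) * (σ^2 * u^a + u^b)^(-p-1-1)))) u :=
    fun u hu => hasDerivAt_h1 σ a b p K u hu
  have ht : (0:ℝ) < ‖x‖^2 := by have := norm_pos_iff.mpr hx; positivity
  set t : ℝ := ‖x‖^2 with ht_def
  have hlap : lap V x =
      4 * t * (K * ((σ^2 * (a * ((a-1) * t^(a-1-1))) + b * ((b-1) * t^(b-1-1))) * -p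
            * (σ^2 * t^a + t^b)^(-p-1)
          + (σ^2 * (a * t^(a-1)) + b * t^(b-1)) * -p
            * ((σ^2 * (a * t^(a-1)) + b * t^(b-1)) * (-p-1) * (σ^2 * t^a + t^b)^(-p-1-1))))
      + 2 * N * (K * ((σ^2 * (a * t^(a-1)) + b * t^(b-1)) * -p * (σ^2 * t^a + t^b)^(-p-1))) := by
    rw [hV]
    exact lap_radial _ _ _ hd1 hd2 x hx
  have hVx : V x = K * (σ^2 * t^a + t^b)^(-p) := by rw [hV]
  rw [hlap, hVx]
  clear hlap hVx hV hVdef hd1 hd2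
  -- pure real algebra from here
  have hW : 0 < σ^2*t^a + t^b := wpos σ a b t ht
  have hRHS : (K * (σ^2*t^a+t^b)^(-p)) ^ (((N:ℝ)+2)/((N:ℝ)-2))
      = K * (E * σ^2) * (σ^2*t^a+t^b)^(-p-1-1) := by
    rw [Real.mul_rpow hK_pos.le (Real.rpow_nonneg hW.le _)]
    rw [← Real.rpow_mul hW.le]
    rw [show -p * (((N:ℝ)+2)/((N:ℝ)-2)) = -p-1-1 by
      rw [hNp]; field_simp [hp.ne']; ring]
    rw [hK_def, Real.mul_rpow hCμ_pos.le (Real.rpow_pos_of_pos hσ p).le,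
      ← Real.rpow_mul hσ.le, hCμ2, ← Real.rpow_mul hE_pos.le]
    rw [show p/2 * (((N:ℝ)+2)/((N:ℝ)-2)) = p/2 + 1 by rw [hNp]; field_simp [hp.ne']; ring]
    rw [show p * (((N:ℝ)+2)/((N:ℝ)-2)) = p + 2 by rw [hNp]; field_simp [hp.ne']; ring]
    rw [Real.rpow_add hE_pos (p/2) 1, Real.rpow_one, Real.rpow_add hσ p 2, Real.rpow_two]
    ring
  rw [hRHS]
  have e2 : t^(a-1-1) = t^a/t/t := by
    rw [Real.rpow_sub ht, Real.rpow_sub ht, Real.rpow_one]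
  have f2 : t^(b-1-1) = t^b/t/t := by
    rw [Real.rpow_sub ht, Real.rpow_sub ht, Real.rpow_one]
  have e1 : t^(a-1) = t^a/t := by rw [Real.rpow_sub ht, Real.rpow_one]
  have f1 : t^(b-1) = t^b/t := by rw [Real.rpow_sub ht, Real.rpow_one]
  have eW : (σ^2*t^a+t^b)^(-p-1) = (σ^2*t^a+t^b)^(-p-1-1) * (σ^2*t^a+t^b) := by
    rw [← Real.rpow_add_one hW.ne' (-p-1-1)]; congr 1; ring
  have eW0 : (σ^2*t^a+t^b)^(-p) = (σ^2*t^a+t^b)^(-p-1-1) * (σ^2*t^a+t^b) * (σ^2*t^a+t^b) := by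
    rw [← Real.rpow_add_one hW.ne', ← Real.rpow_add_one hW.ne']; congr 1; ring
  have eAB : t^a * t^b = t := by rw [← Real.rpow_add ht, hab, Real.rpow_one]
  rw [e2, f2, e1, f1, eW, eW0]
  set A : ℝ := t^a with hA_def
  set B : ℝ := t^b with hB_def
  have hA_pos : 0 < A := Real.rpow_pos_of_pos ht a
  have hB_pos : 0 < B := Real.rpow_pos_of_pos ht b
  set P : ℝ := (σ^2*A+B)^(-p-1-1) with hP_def
  rw [← eAB]
  rw [show μ = p^2 - s^2 by linarith, hNp, hE2, ha_def, hb_def]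
  field_simp
  ring
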